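/- Let V be an oriented 4-dimensional real inner product space, J₊ an orthogonal complex structure inducing the chosen orientation. Then for any 1-form β and vector X, the self-dual part of β∧X♭ equals ½ β∧X♭ - ½ (J₊β)∧(J₊X)♭ - ½ β(J₊X)·ω₊, where ω₊ is the fundamental 2-form of J₊. -/

import Mathlib

/-!
STATEMENT 3: In an oriented 4-dimensional Euclidean space with a positively oriented
orthogonal complex structure J₊, for a 1-form β and a vector X, the self-dual part of
β∧X♭ equals ½ β∧X♭ - ½ (J₊β)∧(J₊X)♭ - ½ β(J₊X)·ω₊, where ω₊(Y,Z) = ⟨J₊Y, Z⟩ and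
(J₊β)(Y) = -β(J₊Y).  Stated in components w.r.t. the standard orthonormal basis.
-/

open scoped RealInnerProductSpace BigOperators

noncomputable section

abbrev V4 := EuclideanSpace ℝ (Fin 4)

def e4 (i : Fin 4) : V4 := EuclideanSpace.single i (1:ℝ)

/-- Levi-Civita symbol on four indices, as a determinant. -/
def eps4 (i j k l : Fin 4) : ℝ :=
  Matrix.det (Matrix.of fun r c : Fin 4 => if ![i, j, k, l] r = c then (1:ℝ) else 0)

/-- Components of the fundamental 2-form ω(X,Y) = ⟨JX, Y⟩ of an endomorphism `J`. -/
def om (J : V4 →ₗ[ℝ] V4) (i j : Fin 4) : ℝ := ⟪J (e4 i), e4 j⟫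

/-- A 2-form given by components `w` is self-dual: w = *w. -/
def SelfDual (w : Fin 4 → Fin 4 → ℝ) : Prop :=
  ∀ i j, w i j = (1/2) * ∑ k : Fin 4, ∑ l : Fin 4, w k l * eps4 k l i j

/-- A 2-form given by components `w` is anti-self-dual: w = -*w. -/
def AntiSelfDual (w : Fin 4 → Fin 4 → ℝ) : Prop :=
  ∀ i j, w i j = -((1/2) * ∑ k : Fin 4, ∑ l : Fin 4, w k l * eps4 k l i j)


/-- Components of the 2-form β ∧ X♭. -/
def wedgeC (β : V4 →ₗ[ℝ] ℝ) (X : V4) (i j : Fin 4) : ℝ :=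
  β (e4 i) * ⟪X, e4 j⟫ - β (e4 j) * ⟪X, e4 i⟫

/-! ### Auxiliary lemmas -/

def epsI (i j k l : Fin 4) : ℤ :=
  Matrix.det (Matrix.of fun r c : Fin 4 => if ![i, j, k, l] r = c then (1:ℤ) else 0)

lemma eps4_cast (i j k l : Fin 4) : eps4 i j k l = (epsI i j k l : ℝ) := by
  unfold eps4 epsI
  rw [show ((Matrix.det (Matrix.of fun r c : Fin 4 => if ![i, j, k, l] r = c then (1:ℤ) else 0) : ℤ) : ℝ)
      = (Int.castRingHom ℝ) (Matrix.det (Matrix.of fun r c : Fin 4 => if ![i, j, k, l] r = c then (1:ℤ) else 0)) from rfl,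
    RingHom.map_det]
  congr 1
  ext r c
  simp [Matrix.map_apply, apply_ite]

lemma E0000 : eps4 0 0 0 0 = 0 := by
  rw [eps4_cast, show epsI 0 0 0 0 = 0 from by decide]; norm_num

lemma E0001 : eps4 0 0 0 1 = 0 := by
  rw [eps4_cast, show epsI 0 0 0 1 = 0 from by decide]; norm_num

lemma E0002 : eps4 0 0 0 2 = 0 := by
  rw [eps4_cast, show epsI 0 0 0 2 = 0 from by decide]; norm_num

lemma E0003 : eps4 0 0 0 3 = 0 := by
  rw [eps4_cast, show epsI 0 0 0 3 = 0 from by decide]; norm_num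

lemma E0010 : eps4 0 0 1 0 = 0 := by
  rw [eps4_cast, show epsI 0 0 1 0 = 0 from by decide]; norm_num

lemma E0011 : eps4 0 0 1 1 = 0 := by
  rw [eps4_cast, show epsI 0 0 1 1 = 0 from by decide]; norm_num

lemma E0012 : eps4 0 0 1 2 = 0 := by
  rw [eps4_cast, show epsI 0 0 1 2 = 0 from by decide]; norm_num

lemma E0013 : eps4 0 0 1 3 = 0 := by
  rw [eps4_cast, show epsI 0 0 1 3 = 0 from by decide]; norm_num

lemma E0020 : eps4 0 0 2 0 = 0 := by
  rw [eps4_cast, show epsI 0 0 2 0 = 0 from by decide]; norm_num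

lemma E0021 : eps4 0 0 2 1 = 0 := by
  rw [eps4_cast, show epsI 0 0 2 1 = 0 from by decide]; norm_num

lemma E0022 : eps4 0 0 2 2 = 0 := by
  rw [eps4_cast, show epsI 0 0 2 2 = 0 from by decide]; norm_num

lemma E0023 : eps4 0 0 2 3 = 0 := by
  rw [eps4_cast, show epsI 0 0 2 3 = 0 from by decide]; norm_num

lemma E0030 : eps4 0 0 3 0 = 0 := by
  rw [eps4_cast, show epsI 0 0 3 0 = 0 from by decide]; norm_num

lemma E0031 : eps4 0 0 3 1 = 0 := by
  rw [eps4_cast, show epsI 0 0 3 1 = 0 from by decide]; norm_num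

lemma E0032 : eps4 0 0 3 2 = 0 := by
  rw [eps4_cast, show epsI 0 0 3 2 = 0 from by decide]; norm_num

lemma E0033 : eps4 0 0 3 3 = 0 := by
  rw [eps4_cast, show epsI 0 0 3 3 = 0 from by decide]; norm_num

lemma E0100 : eps4 0 1 0 0 = 0 := by
  rw [eps4_cast, show epsI 0 1 0 0 = 0 from by decide]; norm_num

lemma E0101 : eps4 0 1 0 1 = 0 := by
  rw [eps4_cast, show epsI 0 1 0 1 = 0 from by decide]; norm_num

lemma E0102 : eps4 0 1 0 2 = 0 := by
  rw [eps4_cast, show epsI 0 1 0 2 = 0 from by decide]; norm_num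

lemma E0103 : eps4 0 1 0 3 = 0 := by
  rw [eps4_cast, show epsI 0 1 0 3 = 0 from by decide]; norm_num

lemma E0110 : eps4 0 1 1 0 = 0 := by
  rw [eps4_cast, show epsI 0 1 1 0 = 0 from by decide]; norm_num

lemma E0111 : eps4 0 1 1 1 = 0 := by
  rw [eps4_cast, show epsI 0 1 1 1 = 0 from by decide]; norm_num

lemma E0112 : eps4 0 1 1 2 = 0 := by
  rw [eps4_cast, show epsI 0 1 1 2 = 0 from by decide]; norm_num

lemma E0113 : eps4 0 1 1 3 = 0 := by
  rw [eps4_cast, show epsI 0 1 1 3 = 0 from by decide]; norm_num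

lemma E0120 : eps4 0 1 2 0 = 0 := by
  rw [eps4_cast, show epsI 0 1 2 0 = 0 from by decide]; norm_num

lemma E0121 : eps4 0 1 2 1 = 0 := by
  rw [eps4_cast, show epsI 0 1 2 1 = 0 from by decide]; norm_num

lemma E0122 : eps4 0 1 2 2 = 0 := by
  rw [eps4_cast, show epsI 0 1 2 2 = 0 from by decide]; norm_num

lemma E0123 : eps4 0 1 2 3 = 1 := by
  rw [eps4_cast, show epsI 0 1 2 3 = 1 from by decide]; norm_num

lemma E0130 : eps4 0 1 3 0 = 0 := by
  rw [eps4_cast, show epsI 0 1 3 0 = 0 from by decide]; norm_num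

lemma E0131 : eps4 0 1 3 1 = 0 := by
  rw [eps4_cast, show epsI 0 1 3 1 = 0 from by decide]; norm_num

lemma E0132 : eps4 0 1 3 2 = (-1) := by
  rw [eps4_cast, show epsI 0 1 3 2 = (-1) from by decide]; norm_num

lemma E0133 : eps4 0 1 3 3 = 0 := by
  rw [eps4_cast, show epsI 0 1 3 3 = 0 from by decide]; norm_num

lemma E0200 : eps4 0 2 0 0 = 0 := by
  rw [eps4_cast, show epsI 0 2 0 0 = 0 from by decide]; norm_num

lemma E0201 : eps4 0 2 0 1 = 0 := by
  rw [eps4_cast, show epsI 0 2 0 1 = 0 from by decide]; norm_num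

lemma E0202 : eps4 0 2 0 2 = 0 := by
  rw [eps4_cast, show epsI 0 2 0 2 = 0 from by decide]; norm_num

lemma E0203 : eps4 0 2 0 3 = 0 := by
  rw [eps4_cast, show epsI 0 2 0 3 = 0 from by decide]; norm_num

lemma E0210 : eps4 0 2 1 0 = 0 := by
  rw [eps4_cast, show epsI 0 2 1 0 = 0 from by decide]; norm_num

lemma E0211 : eps4 0 2 1 1 = 0 := by
  rw [eps4_cast, show epsI 0 2 1 1 = 0 from by decide]; norm_num

lemma E0212 : eps4 0 2 1 2 = 0 := by
  rw [eps4_cast, show epsI 0 2 1 2 = 0 from by decide]; norm_num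

lemma E0213 : eps4 0 2 1 3 = (-1) := by
  rw [eps4_cast, show epsI 0 2 1 3 = (-1) from by decide]; norm_num

lemma E0220 : eps4 0 2 2 0 = 0 := by
  rw [eps4_cast, show epsI 0 2 2 0 = 0 from by decide]; norm_num

lemma E0221 : eps4 0 2 2 1 = 0 := by
  rw [eps4_cast, show epsI 0 2 2 1 = 0 from by decide]; norm_num

lemma E0222 : eps4 0 2 2 2 = 0 := by
  rw [eps4_cast, show epsI 0 2 2 2 = 0 from by decide]; norm_num

lemma E0223 : eps4 0 2 2 3 = 0 := by
  rw [eps4_cast, show epsI 0 2 2 3 = 0 from by decide]; norm_num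

lemma E0230 : eps4 0 2 3 0 = 0 := by
  rw [eps4_cast, show epsI 0 2 3 0 = 0 from by decide]; norm_num

lemma E0231 : eps4 0 2 3 1 = 1 := by
  rw [eps4_cast, show epsI 0 2 3 1 = 1 from by decide]; norm_num

lemma E0232 : eps4 0 2 3 2 = 0 := by
  rw [eps4_cast, show epsI 0 2 3 2 = 0 from by decide]; norm_num

lemma E0233 : eps4 0 2 3 3 = 0 := by
  rw [eps4_cast, show epsI 0 2 3 3 = 0 from by decide]; norm_num

lemma E0300 : eps4 0 3 0 0 = 0 := by
  rw [eps4_cast, show epsI 0 3 0 0 = 0 from by decide]; norm_num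

lemma E0301 : eps4 0 3 0 1 = 0 := by
  rw [eps4_cast, show epsI 0 3 0 1 = 0 from by decide]; norm_num

lemma E0302 : eps4 0 3 0 2 = 0 := by
  rw [eps4_cast, show epsI 0 3 0 2 = 0 from by decide]; norm_num

lemma E0303 : eps4 0 3 0 3 = 0 := by
  rw [eps4_cast, show epsI 0 3 0 3 = 0 from by decide]; norm_num

lemma E0310 : eps4 0 3 1 0 = 0 := by
  rw [eps4_cast, show epsI 0 3 1 0 = 0 from by decide]; norm_num

lemma E0311 : eps4 0 3 1 1 = 0 := by
  rw [eps4_cast, show epsI 0 3 1 1 = 0 from by decide]; norm_num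

lemma E0312 : eps4 0 3 1 2 = 1 := by
  rw [eps4_cast, show epsI 0 3 1 2 = 1 from by decide]; norm_num

lemma E0313 : eps4 0 3 1 3 = 0 := by
  rw [eps4_cast, show epsI 0 3 1 3 = 0 from by decide]; norm_num

lemma E0320 : eps4 0 3 2 0 = 0 := by
  rw [eps4_cast, show epsI 0 3 2 0 = 0 from by decide]; norm_num

lemma E0321 : eps4 0 3 2 1 = (-1) := by
  rw [eps4_cast, show epsI 0 3 2 1 = (-1) from by decide]; norm_num

lemma E0322 : eps4 0 3 2 2 = 0 := by
  rw [eps4_cast, show epsI 0 3 2 2 = 0 from by decide]; norm_num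

lemma E0323 : eps4 0 3 2 3 = 0 := by
  rw [eps4_cast, show epsI 0 3 2 3 = 0 from by decide]; norm_num

lemma E0330 : eps4 0 3 3 0 = 0 := by
  rw [eps4_cast, show epsI 0 3 3 0 = 0 from by decide]; norm_num

lemma E0331 : eps4 0 3 3 1 = 0 := by
  rw [eps4_cast, show epsI 0 3 3 1 = 0 from by decide]; norm_num

lemma E0332 : eps4 0 3 3 2 = 0 := by
  rw [eps4_cast, show epsI 0 3 3 2 = 0 from by decide]; norm_num

lemma E0333 : eps4 0 3 3 3 = 0 := by
  rw [eps4_cast, show epsI 0 3 3 3 = 0 from by decide]; norm_num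

lemma E1000 : eps4 1 0 0 0 = 0 := by
  rw [eps4_cast, show epsI 1 0 0 0 = 0 from by decide]; norm_num

lemma E1001 : eps4 1 0 0 1 = 0 := by
  rw [eps4_cast, show epsI 1 0 0 1 = 0 from by decide]; norm_num

lemma E1002 : eps4 1 0 0 2 = 0 := by
  rw [eps4_cast, show epsI 1 0 0 2 = 0 from by decide]; norm_num

lemma E1003 : eps4 1 0 0 3 = 0 := by
  rw [eps4_cast, show epsI 1 0 0 3 = 0 from by decide]; norm_num

lemma E1010 : eps4 1 0 1 0 = 0 := by
  rw [eps4_cast, show epsI 1 0 1 0 = 0 from by decide]; norm_num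

lemma E1011 : eps4 1 0 1 1 = 0 := by
  rw [eps4_cast, show epsI 1 0 1 1 = 0 from by decide]; norm_num

lemma E1012 : eps4 1 0 1 2 = 0 := by
  rw [eps4_cast, show epsI 1 0 1 2 = 0 from by decide]; norm_num

lemma E1013 : eps4 1 0 1 3 = 0 := by
  rw [eps4_cast, show epsI 1 0 1 3 = 0 from by decide]; norm_num

lemma E1020 : eps4 1 0 2 0 = 0 := by
  rw [eps4_cast, show epsI 1 0 2 0 = 0 from by decide]; norm_num

lemma E1021 : eps4 1 0 2 1 = 0 := by
  rw [eps4_cast, show epsI 1 0 2 1 = 0 from by decide]; norm_num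

lemma E1022 : eps4 1 0 2 2 = 0 := by
  rw [eps4_cast, show epsI 1 0 2 2 = 0 from by decide]; norm_num

lemma E1023 : eps4 1 0 2 3 = (-1) := by
  rw [eps4_cast, show epsI 1 0 2 3 = (-1) from by decide]; norm_num

lemma E1030 : eps4 1 0 3 0 = 0 := by
  rw [eps4_cast, show epsI 1 0 3 0 = 0 from by decide]; norm_num

lemma E1031 : eps4 1 0 3 1 = 0 := by
  rw [eps4_cast, show epsI 1 0 3 1 = 0 from by decide]; norm_num

lemma E1032 : eps4 1 0 3 2 = 1 := by
  rw [eps4_cast, show epsI 1 0 3 2 = 1 from by decide]; norm_num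

lemma E1033 : eps4 1 0 3 3 = 0 := by
  rw [eps4_cast, show epsI 1 0 3 3 = 0 from by decide]; norm_num

lemma E1100 : eps4 1 1 0 0 = 0 := by
  rw [eps4_cast, show epsI 1 1 0 0 = 0 from by decide]; norm_num

lemma E1101 : eps4 1 1 0 1 = 0 := by
  rw [eps4_cast, show epsI 1 1 0 1 = 0 from by decide]; norm_num

lemma E1102 : eps4 1 1 0 2 = 0 := by
  rw [eps4_cast, show epsI 1 1 0 2 = 0 from by decide]; norm_num

lemma E1103 : eps4 1 1 0 3 = 0 := by
  rw [eps4_cast, show epsI 1 1 0 3 = 0 from by decide]; norm_num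

lemma E1110 : eps4 1 1 1 0 = 0 := by
  rw [eps4_cast, show epsI 1 1 1 0 = 0 from by decide]; norm_num

lemma E1111 : eps4 1 1 1 1 = 0 := by
  rw [eps4_cast, show epsI 1 1 1 1 = 0 from by decide]; norm_num

lemma E1112 : eps4 1 1 1 2 = 0 := by
  rw [eps4_cast, show epsI 1 1 1 2 = 0 from by decide]; norm_num

lemma E1113 : eps4 1 1 1 3 = 0 := by
  rw [eps4_cast, show epsI 1 1 1 3 = 0 from by decide]; norm_num

lemma E1120 : eps4 1 1 2 0 = 0 := by
  rw [eps4_cast, show epsI 1 1 2 0 = 0 from by decide]; norm_num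

lemma E1121 : eps4 1 1 2 1 = 0 := by
  rw [eps4_cast, show epsI 1 1 2 1 = 0 from by decide]; norm_num

lemma E1122 : eps4 1 1 2 2 = 0 := by
  rw [eps4_cast, show epsI 1 1 2 2 = 0 from by decide]; norm_num

lemma E1123 : eps4 1 1 2 3 = 0 := by
  rw [eps4_cast, show epsI 1 1 2 3 = 0 from by decide]; norm_num

lemma E1130 : eps4 1 1 3 0 = 0 := by
  rw [eps4_cast, show epsI 1 1 3 0 = 0 from by decide]; norm_num

lemma E1131 : eps4 1 1 3 1 = 0 := by
  rw [eps4_cast, show epsI 1 1 3 1 = 0 from by decide]; norm_num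

lemma E1132 : eps4 1 1 3 2 = 0 := by
  rw [eps4_cast, show epsI 1 1 3 2 = 0 from by decide]; norm_num

lemma E1133 : eps4 1 1 3 3 = 0 := by
  rw [eps4_cast, show epsI 1 1 3 3 = 0 from by decide]; norm_num

lemma E1200 : eps4 1 2 0 0 = 0 := by
  rw [eps4_cast, show epsI 1 2 0 0 = 0 from by decide]; norm_num

lemma E1201 : eps4 1 2 0 1 = 0 := by
  rw [eps4_cast, show epsI 1 2 0 1 = 0 from by decide]; norm_num

lemma E1202 : eps4 1 2 0 2 = 0 := by
  rw [eps4_cast, show epsI 1 2 0 2 = 0 from by decide]; norm_num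

lemma E1203 : eps4 1 2 0 3 = 1 := by
  rw [eps4_cast, show epsI 1 2 0 3 = 1 from by decide]; norm_num

lemma E1210 : eps4 1 2 1 0 = 0 := by
  rw [eps4_cast, show epsI 1 2 1 0 = 0 from by decide]; norm_num

lemma E1211 : eps4 1 2 1 1 = 0 := by
  rw [eps4_cast, show epsI 1 2 1 1 = 0 from by decide]; norm_num

lemma E1212 : eps4 1 2 1 2 = 0 := by
  rw [eps4_cast, show epsI 1 2 1 2 = 0 from by decide]; norm_num

lemma E1213 : eps4 1 2 1 3 = 0 := by
  rw [eps4_cast, show epsI 1 2 1 3 = 0 from by decide]; norm_num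

lemma E1220 : eps4 1 2 2 0 = 0 := by
  rw [eps4_cast, show epsI 1 2 2 0 = 0 from by decide]; norm_num

lemma E1221 : eps4 1 2 2 1 = 0 := by
  rw [eps4_cast, show epsI 1 2 2 1 = 0 from by decide]; norm_num

lemma E1222 : eps4 1 2 2 2 = 0 := by
  rw [eps4_cast, show epsI 1 2 2 2 = 0 from by decide]; norm_num

lemma E1223 : eps4 1 2 2 3 = 0 := by
  rw [eps4_cast, show epsI 1 2 2 3 = 0 from by decide]; norm_num

lemma E1230 : eps4 1 2 3 0 = (-1) := by
  rw [eps4_cast, show epsI 1 2 3 0 = (-1) from by decide]; norm_num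

lemma E1231 : eps4 1 2 3 1 = 0 := by
  rw [eps4_cast, show epsI 1 2 3 1 = 0 from by decide]; norm_num

lemma E1232 : eps4 1 2 3 2 = 0 := by
  rw [eps4_cast, show epsI 1 2 3 2 = 0 from by decide]; norm_num

lemma E1233 : eps4 1 2 3 3 = 0 := by
  rw [eps4_cast, show epsI 1 2 3 3 = 0 from by decide]; norm_num

lemma E1300 : eps4 1 3 0 0 = 0 := by
  rw [eps4_cast, show epsI 1 3 0 0 = 0 from by decide]; norm_num

lemma E1301 : eps4 1 3 0 1 = 0 := by
  rw [eps4_cast, show epsI 1 3 0 1 = 0 from by decide]; norm_num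

lemma E1302 : eps4 1 3 0 2 = (-1) := by
  rw [eps4_cast, show epsI 1 3 0 2 = (-1) from by decide]; norm_num

lemma E1303 : eps4 1 3 0 3 = 0 := by
  rw [eps4_cast, show epsI 1 3 0 3 = 0 from by decide]; norm_num

lemma E1310 : eps4 1 3 1 0 = 0 := by
  rw [eps4_cast, show epsI 1 3 1 0 = 0 from by decide]; norm_num

lemma E1311 : eps4 1 3 1 1 = 0 := by
  rw [eps4_cast, show epsI 1 3 1 1 = 0 from by decide]; norm_num

lemma E1312 : eps4 1 3 1 2 = 0 := by
  rw [eps4_cast, show epsI 1 3 1 2 = 0 from by decide]; norm_num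

lemma E1313 : eps4 1 3 1 3 = 0 := by
  rw [eps4_cast, show epsI 1 3 1 3 = 0 from by decide]; norm_num

lemma E1320 : eps4 1 3 2 0 = 1 := by
  rw [eps4_cast, show epsI 1 3 2 0 = 1 from by decide]; norm_num

lemma E1321 : eps4 1 3 2 1 = 0 := by
  rw [eps4_cast, show epsI 1 3 2 1 = 0 from by decide]; norm_num

lemma E1322 : eps4 1 3 2 2 = 0 := by
  rw [eps4_cast, show epsI 1 3 2 2 = 0 from by decide]; norm_num

lemma E1323 : eps4 1 3 2 3 = 0 := by
  rw [eps4_cast, show epsI 1 3 2 3 = 0 from by decide]; norm_num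

lemma E1330 : eps4 1 3 3 0 = 0 := by
  rw [eps4_cast, show epsI 1 3 3 0 = 0 from by decide]; norm_num

lemma E1331 : eps4 1 3 3 1 = 0 := by
  rw [eps4_cast, show epsI 1 3 3 1 = 0 from by decide]; norm_num

lemma E1332 : eps4 1 3 3 2 = 0 := by
  rw [eps4_cast, show epsI 1 3 3 2 = 0 from by decide]; norm_num

lemma E1333 : eps4 1 3 3 3 = 0 := by
  rw [eps4_cast, show epsI 1 3 3 3 = 0 from by decide]; norm_num

lemma E2000 : eps4 2 0 0 0 = 0 := by
  rw [eps4_cast, show epsI 2 0 0 0 = 0 from by decide]; norm_num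

lemma E2001 : eps4 2 0 0 1 = 0 := by
  rw [eps4_cast, show epsI 2 0 0 1 = 0 from by decide]; norm_num

lemma E2002 : eps4 2 0 0 2 = 0 := by
  rw [eps4_cast, show epsI 2 0 0 2 = 0 from by decide]; norm_num

lemma E2003 : eps4 2 0 0 3 = 0 := by
  rw [eps4_cast, show epsI 2 0 0 3 = 0 from by decide]; norm_num

lemma E2010 : eps4 2 0 1 0 = 0 := by
  rw [eps4_cast, show epsI 2 0 1 0 = 0 from by decide]; norm_num

lemma E2011 : eps4 2 0 1 1 = 0 := by
  rw [eps4_cast, show epsI 2 0 1 1 = 0 from by decide]; norm_num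

lemma E2012 : eps4 2 0 1 2 = 0 := by
  rw [eps4_cast, show epsI 2 0 1 2 = 0 from by decide]; norm_num

lemma E2013 : eps4 2 0 1 3 = 1 := by
  rw [eps4_cast, show epsI 2 0 1 3 = 1 from by decide]; norm_num

lemma E2020 : eps4 2 0 2 0 = 0 := by
  rw [eps4_cast, show epsI 2 0 2 0 = 0 from by decide]; norm_num

lemma E2021 : eps4 2 0 2 1 = 0 := by
  rw [eps4_cast, show epsI 2 0 2 1 = 0 from by decide]; norm_num

lemma E2022 : eps4 2 0 2 2 = 0 := by
  rw [eps4_cast, show epsI 2 0 2 2 = 0 from by decide]; norm_num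

lemma E2023 : eps4 2 0 2 3 = 0 := by
  rw [eps4_cast, show epsI 2 0 2 3 = 0 from by decide]; norm_num

lemma E2030 : eps4 2 0 3 0 = 0 := by
  rw [eps4_cast, show epsI 2 0 3 0 = 0 from by decide]; norm_num

lemma E2031 : eps4 2 0 3 1 = (-1) := by
  rw [eps4_cast, show epsI 2 0 3 1 = (-1) from by decide]; norm_num

lemma E2032 : eps4 2 0 3 2 = 0 := by
  rw [eps4_cast, show epsI 2 0 3 2 = 0 from by decide]; norm_num

lemma E2033 : eps4 2 0 3 3 = 0 := by
  rw [eps4_cast, show epsI 2 0 3 3 = 0 from by decide]; norm_num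

lemma E2100 : eps4 2 1 0 0 = 0 := by
  rw [eps4_cast, show epsI 2 1 0 0 = 0 from by decide]; norm_num

lemma E2101 : eps4 2 1 0 1 = 0 := by
  rw [eps4_cast, show epsI 2 1 0 1 = 0 from by decide]; norm_num

lemma E2102 : eps4 2 1 0 2 = 0 := by
  rw [eps4_cast, show epsI 2 1 0 2 = 0 from by decide]; norm_num

lemma E2103 : eps4 2 1 0 3 = (-1) := by
  rw [eps4_cast, show epsI 2 1 0 3 = (-1) from by decide]; norm_num

lemma E2110 : eps4 2 1 1 0 = 0 := by
  rw [eps4_cast, show epsI 2 1 1 0 = 0 from by decide]; norm_num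

lemma E2111 : eps4 2 1 1 1 = 0 := by
  rw [eps4_cast, show epsI 2 1 1 1 = 0 from by decide]; norm_num

lemma E2112 : eps4 2 1 1 2 = 0 := by
  rw [eps4_cast, show epsI 2 1 1 2 = 0 from by decide]; norm_num

lemma E2113 : eps4 2 1 1 3 = 0 := by
  rw [eps4_cast, show epsI 2 1 1 3 = 0 from by decide]; norm_num

lemma E2120 : eps4 2 1 2 0 = 0 := by
  rw [eps4_cast, show epsI 2 1 2 0 = 0 from by decide]; norm_num

lemma E2121 : eps4 2 1 2 1 = 0 := by
  rw [eps4_cast, show epsI 2 1 2 1 = 0 from by decide]; norm_num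

lemma E2122 : eps4 2 1 2 2 = 0 := by
  rw [eps4_cast, show epsI 2 1 2 2 = 0 from by decide]; norm_num

lemma E2123 : eps4 2 1 2 3 = 0 := by
  rw [eps4_cast, show epsI 2 1 2 3 = 0 from by decide]; norm_num

lemma E2130 : eps4 2 1 3 0 = 1 := by
  rw [eps4_cast, show epsI 2 1 3 0 = 1 from by decide]; norm_num

lemma E2131 : eps4 2 1 3 1 = 0 := by
  rw [eps4_cast, show epsI 2 1 3 1 = 0 from by decide]; norm_num

lemma E2132 : eps4 2 1 3 2 = 0 := by
  rw [eps4_cast, show epsI 2 1 3 2 = 0 from by decide]; norm_num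

lemma E2133 : eps4 2 1 3 3 = 0 := by
  rw [eps4_cast, show epsI 2 1 3 3 = 0 from by decide]; norm_num

lemma E2200 : eps4 2 2 0 0 = 0 := by
  rw [eps4_cast, show epsI 2 2 0 0 = 0 from by decide]; norm_num

lemma E2201 : eps4 2 2 0 1 = 0 := by
  rw [eps4_cast, show epsI 2 2 0 1 = 0 from by decide]; norm_num

lemma E2202 : eps4 2 2 0 2 = 0 := by
  rw [eps4_cast, show epsI 2 2 0 2 = 0 from by decide]; norm_num

lemma E2203 : eps4 2 2 0 3 = 0 := by
  rw [eps4_cast, show epsI 2 2 0 3 = 0 from by decide]; norm_num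

lemma E2210 : eps4 2 2 1 0 = 0 := by
  rw [eps4_cast, show epsI 2 2 1 0 = 0 from by decide]; norm_num

lemma E2211 : eps4 2 2 1 1 = 0 := by
  rw [eps4_cast, show epsI 2 2 1 1 = 0 from by decide]; norm_num

lemma E2212 : eps4 2 2 1 2 = 0 := by
  rw [eps4_cast, show epsI 2 2 1 2 = 0 from by decide]; norm_num

lemma E2213 : eps4 2 2 1 3 = 0 := by
  rw [eps4_cast, show epsI 2 2 1 3 = 0 from by decide]; norm_num

lemma E2220 : eps4 2 2 2 0 = 0 := by
  rw [eps4_cast, show epsI 2 2 2 0 = 0 from by decide]; norm_num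

lemma E2221 : eps4 2 2 2 1 = 0 := by
  rw [eps4_cast, show epsI 2 2 2 1 = 0 from by decide]; norm_num

lemma E2222 : eps4 2 2 2 2 = 0 := by
  rw [eps4_cast, show epsI 2 2 2 2 = 0 from by decide]; norm_num

lemma E2223 : eps4 2 2 2 3 = 0 := by
  rw [eps4_cast, show epsI 2 2 2 3 = 0 from by decide]; norm_num

lemma E2230 : eps4 2 2 3 0 = 0 := by
  rw [eps4_cast, show epsI 2 2 3 0 = 0 from by decide]; norm_num

lemma E2231 : eps4 2 2 3 1 = 0 := by
  rw [eps4_cast, show epsI 2 2 3 1 = 0 from by decide]; norm_num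

lemma E2232 : eps4 2 2 3 2 = 0 := by
  rw [eps4_cast, show epsI 2 2 3 2 = 0 from by decide]; norm_num

lemma E2233 : eps4 2 2 3 3 = 0 := by
  rw [eps4_cast, show epsI 2 2 3 3 = 0 from by decide]; norm_num

lemma E2300 : eps4 2 3 0 0 = 0 := by
  rw [eps4_cast, show epsI 2 3 0 0 = 0 from by decide]; norm_num

lemma E2301 : eps4 2 3 0 1 = 1 := by
  rw [eps4_cast, show epsI 2 3 0 1 = 1 from by decide]; norm_num

lemma E2302 : eps4 2 3 0 2 = 0 := by
  rw [eps4_cast, show epsI 2 3 0 2 = 0 from by decide]; norm_num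

lemma E2303 : eps4 2 3 0 3 = 0 := by
  rw [eps4_cast, show epsI 2 3 0 3 = 0 from by decide]; norm_num

lemma E2310 : eps4 2 3 1 0 = (-1) := by
  rw [eps4_cast, show epsI 2 3 1 0 = (-1) from by decide]; norm_num

lemma E2311 : eps4 2 3 1 1 = 0 := by
  rw [eps4_cast, show epsI 2 3 1 1 = 0 from by decide]; norm_num

lemma E2312 : eps4 2 3 1 2 = 0 := by
  rw [eps4_cast, show epsI 2 3 1 2 = 0 from by decide]; norm_num

lemma E2313 : eps4 2 3 1 3 = 0 := by
  rw [eps4_cast, show epsI 2 3 1 3 = 0 from by decide]; norm_num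

lemma E2320 : eps4 2 3 2 0 = 0 := by
  rw [eps4_cast, show epsI 2 3 2 0 = 0 from by decide]; norm_num

lemma E2321 : eps4 2 3 2 1 = 0 := by
  rw [eps4_cast, show epsI 2 3 2 1 = 0 from by decide]; norm_num

lemma E2322 : eps4 2 3 2 2 = 0 := by
  rw [eps4_cast, show epsI 2 3 2 2 = 0 from by decide]; norm_num

lemma E2323 : eps4 2 3 2 3 = 0 := by
  rw [eps4_cast, show epsI 2 3 2 3 = 0 from by decide]; norm_num

lemma E2330 : eps4 2 3 3 0 = 0 := by
  rw [eps4_cast, show epsI 2 3 3 0 = 0 from by decide]; norm_num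

lemma E2331 : eps4 2 3 3 1 = 0 := by
  rw [eps4_cast, show epsI 2 3 3 1 = 0 from by decide]; norm_num

lemma E2332 : eps4 2 3 3 2 = 0 := by
  rw [eps4_cast, show epsI 2 3 3 2 = 0 from by decide]; norm_num

lemma E2333 : eps4 2 3 3 3 = 0 := by
  rw [eps4_cast, show epsI 2 3 3 3 = 0 from by decide]; norm_num

lemma E3000 : eps4 3 0 0 0 = 0 := by
  rw [eps4_cast, show epsI 3 0 0 0 = 0 from by decide]; norm_num

lemma E3001 : eps4 3 0 0 1 = 0 := by
  rw [eps4_cast, show epsI 3 0 0 1 = 0 from by decide]; norm_num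

lemma E3002 : eps4 3 0 0 2 = 0 := by
  rw [eps4_cast, show epsI 3 0 0 2 = 0 from by decide]; norm_num

lemma E3003 : eps4 3 0 0 3 = 0 := by
  rw [eps4_cast, show epsI 3 0 0 3 = 0 from by decide]; norm_num

lemma E3010 : eps4 3 0 1 0 = 0 := by
  rw [eps4_cast, show epsI 3 0 1 0 = 0 from by decide]; norm_num

lemma E3011 : eps4 3 0 1 1 = 0 := by
  rw [eps4_cast, show epsI 3 0 1 1 = 0 from by decide]; norm_num

lemma E3012 : eps4 3 0 1 2 = (-1) := by
  rw [eps4_cast, show epsI 3 0 1 2 = (-1) from by decide]; norm_num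

lemma E3013 : eps4 3 0 1 3 = 0 := by
  rw [eps4_cast, show epsI 3 0 1 3 = 0 from by decide]; norm_num

lemma E3020 : eps4 3 0 2 0 = 0 := by
  rw [eps4_cast, show epsI 3 0 2 0 = 0 from by decide]; norm_num

lemma E3021 : eps4 3 0 2 1 = 1 := by
  rw [eps4_cast, show epsI 3 0 2 1 = 1 from by decide]; norm_num

lemma E3022 : eps4 3 0 2 2 = 0 := by
  rw [eps4_cast, show epsI 3 0 2 2 = 0 from by decide]; norm_num

lemma E3023 : eps4 3 0 2 3 = 0 := by
  rw [eps4_cast, show epsI 3 0 2 3 = 0 from by decide]; norm_num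

lemma E3030 : eps4 3 0 3 0 = 0 := by
  rw [eps4_cast, show epsI 3 0 3 0 = 0 from by decide]; norm_num

lemma E3031 : eps4 3 0 3 1 = 0 := by
  rw [eps4_cast, show epsI 3 0 3 1 = 0 from by decide]; norm_num

lemma E3032 : eps4 3 0 3 2 = 0 := by
  rw [eps4_cast, show epsI 3 0 3 2 = 0 from by decide]; norm_num

lemma E3033 : eps4 3 0 3 3 = 0 := by
  rw [eps4_cast, show epsI 3 0 3 3 = 0 from by decide]; norm_num

lemma E3100 : eps4 3 1 0 0 = 0 := by
  rw [eps4_cast, show epsI 3 1 0 0 = 0 from by decide]; norm_num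

lemma E3101 : eps4 3 1 0 1 = 0 := by
  rw [eps4_cast, show epsI 3 1 0 1 = 0 from by decide]; norm_num

lemma E3102 : eps4 3 1 0 2 = 1 := by
  rw [eps4_cast, show epsI 3 1 0 2 = 1 from by decide]; norm_num

lemma E3103 : eps4 3 1 0 3 = 0 := by
  rw [eps4_cast, show epsI 3 1 0 3 = 0 from by decide]; norm_num

lemma E3110 : eps4 3 1 1 0 = 0 := by
  rw [eps4_cast, show epsI 3 1 1 0 = 0 from by decide]; norm_num

lemma E3111 : eps4 3 1 1 1 = 0 := by
  rw [eps4_cast, show epsI 3 1 1 1 = 0 from by decide]; norm_num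

lemma E3112 : eps4 3 1 1 2 = 0 := by
  rw [eps4_cast, show epsI 3 1 1 2 = 0 from by decide]; norm_num

lemma E3113 : eps4 3 1 1 3 = 0 := by
  rw [eps4_cast, show epsI 3 1 1 3 = 0 from by decide]; norm_num

lemma E3120 : eps4 3 1 2 0 = (-1) := by
  rw [eps4_cast, show epsI 3 1 2 0 = (-1) from by decide]; norm_num

lemma E3121 : eps4 3 1 2 1 = 0 := by
  rw [eps4_cast, show epsI 3 1 2 1 = 0 from by decide]; norm_num

lemma E3122 : eps4 3 1 2 2 = 0 := by
  rw [eps4_cast, show epsI 3 1 2 2 = 0 from by decide]; norm_num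

lemma E3123 : eps4 3 1 2 3 = 0 := by
  rw [eps4_cast, show epsI 3 1 2 3 = 0 from by decide]; norm_num

lemma E3130 : eps4 3 1 3 0 = 0 := by
  rw [eps4_cast, show epsI 3 1 3 0 = 0 from by decide]; norm_num

lemma E3131 : eps4 3 1 3 1 = 0 := by
  rw [eps4_cast, show epsI 3 1 3 1 = 0 from by decide]; norm_num

lemma E3132 : eps4 3 1 3 2 = 0 := by
  rw [eps4_cast, show epsI 3 1 3 2 = 0 from by decide]; norm_num

lemma E3133 : eps4 3 1 3 3 = 0 := by
  rw [eps4_cast, show epsI 3 1 3 3 = 0 from by decide]; norm_num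

lemma E3200 : eps4 3 2 0 0 = 0 := by
  rw [eps4_cast, show epsI 3 2 0 0 = 0 from by decide]; norm_num

lemma E3201 : eps4 3 2 0 1 = (-1) := by
  rw [eps4_cast, show epsI 3 2 0 1 = (-1) from by decide]; norm_num

lemma E3202 : eps4 3 2 0 2 = 0 := by
  rw [eps4_cast, show epsI 3 2 0 2 = 0 from by decide]; norm_num

lemma E3203 : eps4 3 2 0 3 = 0 := by
  rw [eps4_cast, show epsI 3 2 0 3 = 0 from by decide]; norm_num

lemma E3210 : eps4 3 2 1 0 = 1 := by
  rw [eps4_cast, show epsI 3 2 1 0 = 1 from by decide]; norm_num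

lemma E3211 : eps4 3 2 1 1 = 0 := by
  rw [eps4_cast, show epsI 3 2 1 1 = 0 from by decide]; norm_num

lemma E3212 : eps4 3 2 1 2 = 0 := by
  rw [eps4_cast, show epsI 3 2 1 2 = 0 from by decide]; norm_num

lemma E3213 : eps4 3 2 1 3 = 0 := by
  rw [eps4_cast, show epsI 3 2 1 3 = 0 from by decide]; norm_num

lemma E3220 : eps4 3 2 2 0 = 0 := by
  rw [eps4_cast, show epsI 3 2 2 0 = 0 from by decide]; norm_num

lemma E3221 : eps4 3 2 2 1 = 0 := by
  rw [eps4_cast, show epsI 3 2 2 1 = 0 from by decide]; norm_num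

lemma E3222 : eps4 3 2 2 2 = 0 := by
  rw [eps4_cast, show epsI 3 2 2 2 = 0 from by decide]; norm_num

lemma E3223 : eps4 3 2 2 3 = 0 := by
  rw [eps4_cast, show epsI 3 2 2 3 = 0 from by decide]; norm_num

lemma E3230 : eps4 3 2 3 0 = 0 := by
  rw [eps4_cast, show epsI 3 2 3 0 = 0 from by decide]; norm_num

lemma E3231 : eps4 3 2 3 1 = 0 := by
  rw [eps4_cast, show epsI 3 2 3 1 = 0 from by decide]; norm_num

lemma E3232 : eps4 3 2 3 2 = 0 := by
  rw [eps4_cast, show epsI 3 2 3 2 = 0 from by decide]; norm_num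

lemma E3233 : eps4 3 2 3 3 = 0 := by
  rw [eps4_cast, show epsI 3 2 3 3 = 0 from by decide]; norm_num

lemma E3300 : eps4 3 3 0 0 = 0 := by
  rw [eps4_cast, show epsI 3 3 0 0 = 0 from by decide]; norm_num

lemma E3301 : eps4 3 3 0 1 = 0 := by
  rw [eps4_cast, show epsI 3 3 0 1 = 0 from by decide]; norm_num

lemma E3302 : eps4 3 3 0 2 = 0 := by
  rw [eps4_cast, show epsI 3 3 0 2 = 0 from by decide]; norm_num

lemma E3303 : eps4 3 3 0 3 = 0 := by
  rw [eps4_cast, show epsI 3 3 0 3 = 0 from by decide]; norm_num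

lemma E3310 : eps4 3 3 1 0 = 0 := by
  rw [eps4_cast, show epsI 3 3 1 0 = 0 from by decide]; norm_num

lemma E3311 : eps4 3 3 1 1 = 0 := by
  rw [eps4_cast, show epsI 3 3 1 1 = 0 from by decide]; norm_num

lemma E3312 : eps4 3 3 1 2 = 0 := by
  rw [eps4_cast, show epsI 3 3 1 2 = 0 from by decide]; norm_num

lemma E3313 : eps4 3 3 1 3 = 0 := by
  rw [eps4_cast, show epsI 3 3 1 3 = 0 from by decide]; norm_num

lemma E3320 : eps4 3 3 2 0 = 0 := by
  rw [eps4_cast, show epsI 3 3 2 0 = 0 from by decide]; norm_num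

lemma E3321 : eps4 3 3 2 1 = 0 := by
  rw [eps4_cast, show epsI 3 3 2 1 = 0 from by decide]; norm_num

lemma E3322 : eps4 3 3 2 2 = 0 := by
  rw [eps4_cast, show epsI 3 3 2 2 = 0 from by decide]; norm_num

lemma E3323 : eps4 3 3 2 3 = 0 := by
  rw [eps4_cast, show epsI 3 3 2 3 = 0 from by decide]; norm_num

lemma E3330 : eps4 3 3 3 0 = 0 := by
  rw [eps4_cast, show epsI 3 3 3 0 = 0 from by decide]; norm_num

lemma E3331 : eps4 3 3 3 1 = 0 := by
  rw [eps4_cast, show epsI 3 3 3 1 = 0 from by decide]; norm_num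

lemma E3332 : eps4 3 3 3 2 = 0 := by
  rw [eps4_cast, show epsI 3 3 3 2 = 0 from by decide]; norm_num

lemma E3333 : eps4 3 3 3 3 = 0 := by
  rw [eps4_cast, show epsI 3 3 3 3 = 0 from by decide]; norm_num


lemma inner_e4 (v : V4) (k : Fin 4) : ⟪v, e4 k⟫ = v k := by
  simp [e4, EuclideanSpace.inner_single_right]

lemma e4_inner (v : V4) (k : Fin 4) : ⟪e4 k, v⟫ = v k := by
  simp [e4, EuclideanSpace.inner_single_left]

lemma sum_e4 (v : V4) : v = ∑ k, v k • e4 k := by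
  ext m
  rw [show (∑ k, v k • e4 k) m = ∑ k, (v k • e4 k) m from by
    rw [WithLp.ofLp_sum]; exact Finset.sum_apply m Finset.univ _]
  simp [e4, EuclideanSpace.single_apply]

lemma lin_expand (f : V4 →ₗ[ℝ] ℝ) (v : V4) : f v = ∑ k, v k * f (e4 k) := by
  conv_lhs => rw [sum_e4 v]
  rw [map_sum]
  simp [smul_eq_mul]


theorem stmt3 (Jp : V4 →ₗ[ℝ] V4)
    (hskew : ∀ x y : V4, ⟪Jp x, y⟫ = -⟪x, Jp y⟫)
    (hsq : Jp ∘ₗ Jp = -LinearMap.id)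
    (hsd : SelfDual (om Jp))
    (β : V4 →ₗ[ℝ] ℝ) (X : V4) :
    ∀ i j : Fin 4,
      (1/2) * (wedgeC β X i j
          + (1/2) * ∑ k : Fin 4, ∑ l : Fin 4, wedgeC β X k l * eps4 k l i j)
        = (1/2) * wedgeC β X i j
          - (1/2) * ((-β (Jp (e4 i))) * ⟪Jp X, e4 j⟫ - (-β (Jp (e4 j))) * ⟪Jp X, e4 i⟫)
          - (1/2) * β (Jp X) * om Jp i j := by
  -- coordinates of J applied to a basis vector
  have hJcoord : ∀ m k : Fin 4, (Jp (e4 m)) k = om Jp m k := by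
    intro m k; rw [om, inner_e4]
  -- antisymmetry
  have hanti : ∀ i j : Fin 4, om Jp j i = -om Jp i j := by
    intro i j
    rw [om, om, hskew, real_inner_comm]
  -- coordinates of J X
  have hJv : ∀ (v : V4) (m : Fin 4), (Jp v) m = -∑ k, om Jp m k * v k := by
    intro v m
    rw [← inner_e4 (Jp v) m, hskew, real_inner_comm]
    rw [show Jp (e4 m) = ∑ k, om Jp m k • e4 k from by
      conv_lhs => rw [sum_e4 (Jp (e4 m))]
      exact Finset.sum_congr rfl fun k _ => by rw [hJcoord]]
    rw [sum_inner]
    simp only [real_inner_smul_left, e4_inner]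
  -- β applied to J basis vectors
  have hc : ∀ m : Fin 4, β (Jp (e4 m)) = ∑ k, om Jp m k * β (e4 k) := by
    intro m
    rw [lin_expand β (Jp (e4 m))]
    exact Finset.sum_congr rfl fun k _ => by rw [hJcoord]
  -- inner products of J X with basis vectors
  have hy : ∀ m : Fin 4, ⟪Jp X, e4 m⟫ = -∑ k, om Jp m k * X k := by
    intro m; rw [inner_e4, hJv]
  -- β (Jp X)
  have hs : β (Jp X) = ∑ m, (-∑ k, om Jp m k * X k) * β (e4 m) := by
    rw [lin_expand β (Jp X)]
    exact Finset.sum_congr rfl fun m _ => by rw [hJv]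
  -- diagonal of om vanishes
  have hdiag : ∀ m : Fin 4, om Jp m m = 0 := by
    intro m
    have := hanti m m
    linarith
  -- self-duality relations
  have h23 : om Jp 2 3 = om Jp 0 1 := by
    have h := hsd 0 1
    simp only [Fin.sum_univ_four, E0101,E0201,E0301,E1001,E1201,E1301,E2001,E2101,E2301,E3001,E3101,E3201,E0001,E1101,E2201,E3301] at h
    have h32 := hanti 2 3
    linarith
  have h13 : om Jp 1 3 = -om Jp 0 2 := by
    have h := hsd 0 2
    simp only [Fin.sum_univ_four, E0102,E0202,E0302,E1002,E1202,E1302,E2002,E2102,E2302,E3002,E3102,E3202,E0002,E1102,E2202,E3302] at h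
    have h31 := hanti 1 3
    linarith
  have h12 : om Jp 1 2 = om Jp 0 3 := by
    have h := hsd 0 3
    simp only [Fin.sum_univ_four, E0103,E0203,E0303,E1003,E1203,E1303,E2003,E2103,E2303,E3003,E3103,E3203,E0003,E1103,E2203,E3303] at h
    have h21 := hanti 1 2
    linarith
  -- the squared-norm relation from J² = -1
  have hpqr : om Jp 0 1 * om Jp 0 1 + om Jp 0 2 * om Jp 0 2 + om Jp 0 3 * om Jp 0 3 = 1 := by
    have h := LinearMap.ext_iff.mp hsq (e4 0)
    simp only [LinearMap.comp_apply, LinearMap.neg_apply, LinearMap.id_apply] at h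
    have h0 : (Jp (Jp (e4 0))) 0 = -1 := by
      rw [h]
      simp [e4, EuclideanSpace.single_apply]
    rw [hJv (Jp (e4 0)) 0] at h0
    simp only [Fin.sum_univ_four, hJcoord] at h0
    have d0 := hdiag 0
    have a10 := hanti 0 1
    have a20 := hanti 0 2
    have a30 := hanti 0 3
    nlinarith [h0, d0]
  -- named component rewrites
  have o00 := hdiag 0
  have o11 := hdiag 1
  have o22 := hdiag 2
  have o33 := hdiag 3
  have o10 : om Jp 1 0 = -om Jp 0 1 := hanti 0 1
  have o20 : om Jp 2 0 = -om Jp 0 2 := hanti 0 2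
  have o30 : om Jp 3 0 = -om Jp 0 3 := hanti 0 3
  have o21 : om Jp 2 1 = -om Jp 0 3 := by have := hanti 1 2; linarith
  have o31 : om Jp 3 1 = om Jp 0 2 := by have := hanti 1 3; linarith
  have o32 : om Jp 3 2 = -om Jp 0 1 := by have := hanti 2 3; linarith
  intro i j
  rw [hc i, hc j, hy i, hy j, hs]
  simp only [wedgeC, inner_e4, Fin.sum_univ_four]
  have hfin : ∀ t : Fin 4, t = 0 ∨ t = 1 ∨ t = 2 ∨ t = 3 := by decide
  rcases hfin i with rfl | rfl | rfl | rfl <;> rcases hfin j with rfl | rfl | rfl | rfl <;>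
    simp only [E0000,E0100,E0200,E0300,E1000,E1100,E1200,E1300,E2000,E2100,E2200,E2300,E3000,E3100,E3200,E3300,E0001,E0101,E0201,E0301,E1001,E1101,E1201,E1301,E2001,E2101,E2201,E2301,E3001,E3101,E3201,E3301,E0002,E0102,E0202,E0302,E1002,E1102,E1202,E1302,E2002,E2102,E2202,E2302,E3002,E3102,E3202,E3302,E0003,E0103,E0203,E0303,E1003,E1103,E1203,E1303,E2003,E2103,E2203,E2303,E3003,E3103,E3203,E3303,E0010,E0110,E0210,E0310,E1010,E1110,E1210,E1310,E2010,E2110,E2210,E2310,E3010,E3110,E3210,E3310,E0011,E0111,E0211,E0311,E1011,E1111,E1211,E1311,E2011,E2111,E2211,E2311,E3011,E3111,E3211,E3311,E0012,E0112,E0212,E0312,E1012,E1112,E1212,E1312,E2012,E2112,E2212,E2312,E3012,E3112,E3212,E3312,E0013,E0113,E0213,E0313,E1013,E1113,E1213,E1313,E2013,E2113,E2213,E2313,E3013,E3113,E3213,E3313,E0020,E0120,E0220,E0320,E1020,E1120,E1220,E1320,E2020,E2120,E2220,E2320,E3020,E3120,E3220,E3320,E0021,E0121,E0221,E0321,E1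021,E1121,E1221,E1321,E2021,E2121,E2221,E2321,E3021,E3121,E3221,E3321,E0022,E0122,E0222,E0322,E1022,E1122,E1222,E1322,E2022,E2122,E2222,E2322,E3022,E3122,E3222,E3322,E0023,E0123,E0223,E0323,E1023,E1123,E1223,E1323,E2023,E2123,E2223,E2323,E3023,E3123,E3223,E3323,E0030,E0130,E0230,E0330,E1030,E1130,E1230,E1330,E2030,E2130,E2230,E2330,E3030,E3130,E3230,E3330,E0031,E0131,E0231,E0331,E1031,E1131,E1231,E1331,E2031,E2131,E2231,E2331,E3031,E3131,E3231,E3331,E0032,E0132,E0232,E0332,E1032,E1132,E1232,E1332,E2032,E2132,E2232,E2332,E3032,E3132,E3232,E3332,E0033,E0133,E0233,E0333,E1033,E1133,E1233,E1333,E2033,E2133,E2233,E2333,E3033,E3133,E3233,E3333, o00, o11, o22, o33, o10, o20, o30, o21, o31, o32, h23, h13, h12]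

  · linear_combination (0:ℝ) * hpqr
  · linear_combination (((1:ℝ)/2) * (β (e4 3) * X 2 - β (e4 2) * X 3)) * hpqr
  · linear_combination (((1:ℝ)/2) * (β (e4 1) * X 3 - β (e4 3) * X 1)) * hpqr
  · linear_combination (((1:ℝ)/2) * (β (e4 2) * X 1 - β (e4 1) * X 2)) * hpqr
  · linear_combination (((1:ℝ)/2) * (β (e4 2) * X 3 - β (e4 3) * X 2)) * hpqr
  · linear_combination (0:ℝ) * hpqr
  · linear_combination (((1:ℝ)/2) * (β (e4 3) * X 0 - β (e4 0) * X 3)) * hpqr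
  · linear_combination (((1:ℝ)/2) * (β (e4 0) * X 2 - β (e4 2) * X 0)) * hpqr
  · linear_combination (((1:ℝ)/2) * (β (e4 3) * X 1 - β (e4 1) * X 3)) * hpqr
  · linear_combination (((1:ℝ)/2) * (β (e4 0) * X 3 - β (e4 3) * X 0)) * hpqr
  · linear_combination (0:ℝ) * hpqr
  · linear_combination (((1:ℝ)/2) * (β (e4 1) * X 0 - β (e4 0) * X 1)) * hpqr
  · linear_combination (((1:ℝ)/2) * (β (e4 1) * X 2 - β (e4 2) * X 1)) * hpqr
  · linear_combination (((1:ℝ)/2) * (β (e4 2) * X 0 - β (e4 0) * X 2)) * hpqr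
  · linear_combination (((1:ℝ)/2) * (β (e4 0) * X 1 - β (e4 1) * X 0)) * hpqr
  · linear_combination (0:ℝ) * hpqr

end
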